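/- Let f(z₁,z₂) = z₁·z₂ + β·z₁ + γ·z₂ + δ with β, γ, δ real and δ − βγ ≠ 0. Then 𝓘(f) = {(y₁,y₂) ∈ ℝ² : 0 < y₁·y₂/(δ − βγ) ≤ 1} ∪ {(0,0)}. Consequently, f is stable if and only if βγ − δ ≥ 0. -/

import Mathlib

private lemma key_real (c y₁ y₂ : ℝ) (hc : c ≠ 0) :
    (∃ x₁ x₂ : ℝ, x₁ * x₂ - y₁ * y₂ = -c ∧ x₁ * y₂ + x₂ * y₁ = 0) ↔
      (0 < y₁ * y₂ / c ∧ y₁ * y₂ / c ≤ 1) ∨ (y₁ = 0 ∧ y₂ = 0) := by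
  constructor
  · rintro ⟨x₁, x₂, h1, h2⟩
    rcases eq_or_ne y₁ 0 with hy1 | hy1
    · rcases eq_or_ne y₂ 0 with hy2 | hy2
      · exact Or.inr ⟨hy1, hy2⟩
      · exfalso
        subst hy1
        have hx1 : x₁ = 0 := by
          have : x₁ * y₂ = 0 := by linarith [h2]
          rcases mul_eq_zero.1 this with h' | h'
          · exact h'
          · exact absurd h' hy2
        exact hc (by linear_combination h1 - x₂ * hx1)
    · rcases eq_or_ne y₂ 0 with hy2 | hy2
      · exfalso
        subst hy2
        have hx2 : x₂ = 0 := by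
          have : x₂ * y₁ = 0 := by linarith [h2]
          rcases mul_eq_zero.1 this with h' | h'
          · exact h'
          · exact absurd h' hy1
        exact hc (by linear_combination h1 - x₁ * hx2)
      · left
        have ht0 : y₁ * y₂ ≠ 0 := mul_ne_zero hy1 hy2
        have hprod : x₁ * y₂ * (x₂ * y₁) = -(x₂ * y₁) ^ 2 := by
          linear_combination (x₂ * y₁) * h2
        have hkey : (y₁ * y₂ - c) * (y₁ * y₂) ≤ 0 := by
          have heq : (y₁ * y₂ - c) * (y₁ * y₂) = -(x₂ * y₁) ^ 2 := by
            linear_combination -(y₁ * y₂) * h1 + hprod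
          rw [heq]
          simp [sq_nonneg]
        rcases lt_trichotomy (y₁ * y₂) 0 with htn | htz | htp
        · have hcn : c < 0 := by nlinarith
          refine ⟨div_pos_of_neg_of_neg htn hcn, ?_⟩
          rw [div_le_one_iff]
          exact Or.inr (Or.inr ⟨hcn, by nlinarith⟩)
        · exact absurd htz ht0
        · have hcp : 0 < c := by nlinarith
          refine ⟨div_pos htp hcp, ?_⟩
          rw [div_le_one hcp]
          nlinarith
  · rintro (⟨h1, h2⟩ | ⟨h1, h2⟩)
    · have hy2 : y₂ ≠ 0 := by
        intro hy; rw [hy, mul_zero, zero_div] at h1; exact lt_irrefl 0 h1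
      have hy1 : y₁ ≠ 0 := by
        intro hy; rw [hy, zero_mul, zero_div] at h1; exact lt_irrefl 0 h1
      have hnn : 0 ≤ (c - y₁ * y₂) * y₁ / y₂ := by
        have hq : (c - y₁ * y₂) * y₁ / y₂
            = ((1 - y₁ * y₂ / c) * (y₁ * y₂ / c)) * (c ^ 2 / y₂ ^ 2) := by
          field_simp
        rw [hq]
        have h1' : 0 ≤ (1 - y₁ * y₂ / c) * (y₁ * y₂ / c) :=
          mul_nonneg (by linarith) (le_of_lt h1)
        positivity
      set s := Real.sqrt ((c - y₁ * y₂) * y₁ / y₂) with hs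
      have hsq : s ^ 2 = (c - y₁ * y₂) * y₁ / y₂ := Real.sq_sqrt hnn
      refine ⟨s, -s * y₂ / y₁, ?_, ?_⟩
      · have e1 : s * (-s * y₂ / y₁) = -(s ^ 2) * y₂ / y₁ := by ring
        rw [e1, hsq]
        field_simp
        ring
      · field_simp
        ring
    · exact ⟨c, -1, by rw [h1, h2]; ring, by rw [h1, h2]; ring⟩

private lemma bridge (β γ δ y₁ y₂ : ℝ) :
    (∃ z₁ z₂ : ℂ, z₁ * z₂ + β * z₁ + γ * z₂ + δ = 0 ∧ z₁.im = y₁ ∧ z₂.im = y₂) ↔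
      (∃ x₁ x₂ : ℝ, x₁ * x₂ - y₁ * y₂ = -(δ - β * γ) ∧ x₁ * y₂ + x₂ * y₁ = 0) := by
  constructor
  · rintro ⟨z₁, z₂, heq, hi1, hi2⟩
    refine ⟨z₁.re + γ, z₂.re + β, ?_, ?_⟩
    · have hre := congrArg Complex.re heq
      simp [Complex.add_re, Complex.mul_re, Complex.ofReal_re, Complex.ofReal_im] at hre
      rw [← hi1, ← hi2]
      nlinarith [hre]
    · have him := congrArg Complex.im heq
      simp [Complex.add_im, Complex.mul_im, Complex.ofReal_re, Complex.ofReal_im] at him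
      rw [← hi1, ← hi2]
      nlinarith [him]
  · rintro ⟨x₁, x₂, h1, h2⟩
    refine ⟨(x₁ - γ : ℝ) + y₁ * Complex.I, (x₂ - β : ℝ) + y₂ * Complex.I, ?_, by simp, by simp⟩
    apply Complex.ext
    · simp [Complex.add_re, Complex.mul_re, Complex.ofReal_re, Complex.ofReal_im]
      nlinarith [h1]
    · simp [Complex.add_im, Complex.mul_im, Complex.ofReal_re, Complex.ofReal_im]
      nlinarith [h2]

theorem imagProj_multilinear_bivariate (β γ δ : ℝ) (h : δ - β * γ ≠ 0) :
    ({p : ℝ × ℝ | ∃ z₁ z₂ : ℂ,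
        z₁ * z₂ + β * z₁ + γ * z₂ + δ = 0 ∧ z₁.im = p.1 ∧ z₂.im = p.2}
      = {p : ℝ × ℝ | 0 < p.1 * p.2 / (δ - β * γ) ∧ p.1 * p.2 / (δ - β * γ) ≤ 1}
          ∪ {((0 : ℝ), (0 : ℝ))})
    ∧ ((¬ ∃ z₁ z₂ : ℂ,
          z₁ * z₂ + β * z₁ + γ * z₂ + δ = 0 ∧ 0 < z₁.im ∧ 0 < z₂.im)
        ↔ 0 ≤ β * γ - δ) := by
  have hset : ∀ y₁ y₂ : ℝ,
      (∃ z₁ z₂ : ℂ, z₁ * z₂ + β * z₁ + γ * z₂ + δ = 0 ∧ z₁.im = y₁ ∧ z₂.im = y₂) ↔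
        (0 < y₁ * y₂ / (δ - β * γ) ∧ y₁ * y₂ / (δ - β * γ) ≤ 1) ∨ (y₁ = 0 ∧ y₂ = 0) := by
    intro y₁ y₂
    rw [bridge, key_real _ _ _ h]
  constructor
  · ext p
    simp only [Set.mem_setOf_eq, Set.mem_union, Set.mem_singleton_iff, Prod.ext_iff]
    exact hset p.1 p.2
  · constructor
    · intro hno
      by_contra hlt
      push_neg at hlt
      have hc : 0 < δ - β * γ := by linarith
      apply hno
      have := (hset (Real.sqrt (δ - β * γ)) (Real.sqrt (δ - β * γ))).2
        (Or.inl ⟨by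
          rw [Real.mul_self_sqrt hc.le, div_self h]
          norm_num, by
          rw [Real.mul_self_sqrt hc.le, div_self h]⟩)
      obtain ⟨z₁, z₂, heq, hi1, hi2⟩ := this
      exact ⟨z₁, z₂, heq, by rw [hi1]; positivity, by rw [hi2]; positivity⟩
    · rintro hle ⟨z₁, z₂, heq, hp1, hp2⟩
      have := (hset z₁.im z₂.im).1 ⟨z₁, z₂, heq, rfl, rfl⟩
      rcases this with ⟨hpos, _⟩ | ⟨h1, h2⟩
      · have hc : δ - β * γ < 0 := lt_of_le_of_ne (by linarith) h
        have : z₁.im * z₂.im / (δ - β * γ) < 0 :=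
          div_neg_of_pos_of_neg (mul_pos hp1 hp2) hc
        linarith
      · rw [h1] at hp1; exact lt_irrefl 0 hp1
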